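/- Let h : A ⥤ B be a functor that is bijective on objects and full, and let g : C ⥤ D be a faithful functor. Let x, x' : A ⥤ C and y, y' : B ⥤ D be functors with h ⋙ y = x ⋙ g and h ⋙ y' = x' ⋙ g, and let d, d' : B ⥤ C be the unique diagonal fill-ins, i.e., h ⋙ d = x, d ⋙ g = y, h ⋙ d' = x', and d' ⋙ g = y'. Let α : x ⟶ x' and β : y ⟶ y' be natural transformations such that whiskerRight α g = whiskerLeft h β (an equality of natural transformations between functors A ⥤ D, well-typed modulo the identifications given by the two commuting-square equalities). Then there exists a unique natural transformation δ : d ⟶ d' such that whiskerLeft h δ = α and whiskerRight δ g = β (modulo the identifications given by the equalities h ⋙ d = x, h ⋙ d' = x', d ⋙ g = y, d' ⋙ g = y'). -/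

import Mathlib

open CategoryTheory

/-- Two-dimensional diagonal fill-in: bijective-on-objects and full functors are
`Cat`-enriched orthogonal to faithful functors.  Given compatible 2-cells `α`, `β`
between the horizontal sides of two commuting squares with the same vertical sides,
there is a unique 2-cell `δ` between the two diagonal fill-ins whiskering to `α`
and `β` (modulo the identifications `eqToHom` of the commuting equalities). -/
theorem bofull_faithful_unique_diagonal_two_cell
    {A : Type*} [Category A] {B : Type*} [Category B]
    {C : Type*} [Category C] {D : Type*} [Category D]
    (h : A ⥤ B) (hbij : Function.Bijective h.obj) (hfull : h.Full)
    (g : C ⥤ D) (hg : g.Faithful)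
    (x x' : A ⥤ C) (y y' : B ⥤ D)
    (hxy : h ⋙ y = x ⋙ g) (hxy' : h ⋙ y' = x' ⋙ g)
    (d d' : B ⥤ C)
    (hd1 : h ⋙ d = x) (hd2 : d ⋙ g = y)
    (hd1' : h ⋙ d' = x') (hd2' : d' ⋙ g = y')
    (α : x ⟶ x') (β : y ⟶ y')
    (hαβ : CategoryTheory.Functor.whiskerRight α g =
      eqToHom hxy.symm ≫ CategoryTheory.Functor.whiskerLeft h β ≫ eqToHom hxy') :
    ∃! δ : d ⟶ d',
      CategoryTheory.Functor.whiskerLeft h δ = eqToHom hd1 ≫ α ≫ eqToHom hd1'.symm ∧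
      CategoryTheory.Functor.whiskerRight δ g = eqToHom hd2 ≫ β ≫ eqToHom hd2'.symm := by
  let e := Equiv.ofBijective h.obj hbij
  have hsurj : ∀ b, h.obj (e.symm b) = b := fun b => e.apply_symm_apply b
  have hsymm : ∀ a, e.symm (h.obj a) = a := fun a => e.symm_apply_apply a
  have key : ∀ a : A, g.map (α.app a) =
      eqToHom (Functor.congr_obj hxy.symm a) ≫ β.app (h.obj a) ≫
        eqToHom (Functor.congr_obj hxy' a) := by
    intro a
    have := NatTrans.congr_app hαβ a
    simpa using this
  have hob : ∀ b, d.obj b = x.obj (e.symm b) := fun b => by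
    rw [← Functor.congr_obj hd1 (e.symm b)]
    simp [hsurj b]
  have hob' : ∀ b, d'.obj b = x'.obj (e.symm b) := fun b => by
    rw [← Functor.congr_obj hd1' (e.symm b)]
    simp [hsurj b]
  let app : ∀ b, d.obj b ⟶ d'.obj b := fun b =>
    eqToHom (hob b) ≫ α.app (e.symm b) ≫ eqToHom (hob' b).symm
  have αcongr : ∀ {a a' : A} (eq : a = a'),
      α.app a = eqToHom (by rw [eq]) ≫ α.app a' ≫ eqToHom (by rw [eq]) := by
    rintro a a' rfl; simp
  have gen : ∀ (a : A) (b : B) (_ : h.obj a = b) (p1 : d.obj b = x.obj a)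
      (p2 : x'.obj a = d'.obj b),
      g.map (eqToHom p1 ≫ α.app a ≫ eqToHom p2) =
        eqToHom (Functor.congr_obj hd2 b) ≫ β.app b ≫
          eqToHom (Functor.congr_obj hd2' b).symm := by
    rintro a b rfl p1 p2
    simp [eqToHom_map, key]
  have key2 : ∀ b, g.map (app b) =
      eqToHom (Functor.congr_obj hd2 b) ≫ β.app b ≫
        eqToHom (Functor.congr_obj hd2' b).symm :=
    fun b => gen (e.symm b) b (hsurj b) (hob b) (hob' b).symm
  have δnat : ∀ ⦃b b' : B⦄ (f : b ⟶ b'), d.map f ≫ app b' = app b ≫ d'.map f := by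
    intro b b' f
    apply hg.map_injective
    have c1 := Functor.congr_hom hd2 f
    have c2 := Functor.congr_hom hd2' f
    simp only [Functor.comp_map] at c1 c2
    simp [key2, c1, c2, β.naturality f]
  refine ⟨⟨app, δnat⟩, ⟨?_, ?_⟩, ?_⟩
  · ext a
    simp [app, αcongr (hsymm a), eqToHom_app]
  · ext b
    simp [key2, eqToHom_app]
  · rintro δ' ⟨-, h2⟩
    ext b
    apply hg.map_injective
    have := NatTrans.congr_app h2 b
    simp only [Functor.whiskerRight_app, NatTrans.comp_app, eqToHom_app] at this
    simp [this, key2]
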